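/- Let G be a finite group with r ≥ 2 irreducible characters. If there exists 1 ≤ t ≤ r−1 such that L_t(G) ≥ C(r,t) − C(r−2,t−1) + 1, then G is almost monomial. -/

import Mathlib

open scoped Classical

noncomputable section

/-- The inner product of two class functions on a finite group. -/
def cdot (G : Type*) [Group G] [Finite G] (f h : G → ℂ) : ℂ :=
  (Nat.card G : ℂ)⁻¹ * ∑ᶠ g : G, f g * (starRingEnd ℂ) (h g)

/-- `f` is the character of a finite-dimensional complex representation of `G`. -/
def IsChar (G : Type*) [Group G] (f : G → ℂ) : Prop :=
  ∃ (n : ℕ) (ρ : G →* Matrix.GeneralLinearGroup (Fin n) ℂ),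
    f = fun g => Matrix.trace ((ρ g : Matrix (Fin n) (Fin n) ℂ))

/-- `f` is a linear (degree one) character of `G`. -/
def IsLinearChar (G : Type*) [Group G] (f : G → ℂ) : Prop :=
  ∃ ρ : G →* ℂˣ, f = fun g => (ρ g : ℂ)

/-- `f` is an irreducible character of `G`: a character of norm one. -/
def IsIrrChar (G : Type*) [Group G] [Finite G] (f : G → ℂ) : Prop :=
  IsChar G f ∧ cdot G f f = 1

/-- The class function on `G` induced from a class function on a subgroup `H`. -/
def ind {G : Type*} [Group G] [Finite G] (H : Subgroup G) (f : H → ℂ) : G → ℂ :=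
  fun g => (Nat.card H : ℂ)⁻¹ *
    ∑ᶠ x : G, if h : x * g * x⁻¹ ∈ H then f ⟨x * g * x⁻¹, h⟩ else 0

/-- Restriction of a class function on `G` to a subgroup `H`. -/
def res {G : Type*} [Group G] (H : Subgroup G) (f : G → ℂ) : H → ℂ := fun x => f x

/-- Restriction of a class function on a subgroup `K` to a smaller subgroup `H ≤ K`. -/
def resTo {G : Type*} [Group G] {K H : Subgroup G} (hHK : H ≤ K) (f : K → ℂ) : H → ℂ :=
  fun x => f ⟨x.1, hHK x.2⟩

/-- Induction of a class function from a subgroup `H` to a larger subgroup `K`. -/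
def indTo {G : Type*} [Group G] [Finite G] (K H : Subgroup G) (f : H → ℂ) : K → ℂ :=
  ind (H.subgroupOf K) fun y => f ⟨y.1.1, Subgroup.mem_subgroupOf.mp y.2⟩

/-- `G` is almost monomial. -/
def IsAlmostMonomial (G : Type*) [Group G] [Finite G] : Prop :=
  ∀ χ φ : G → ℂ, IsIrrChar G χ → IsIrrChar G φ → χ ≠ φ →
    ∃ (H : Subgroup G) (l : H → ℂ), IsLinearChar H l ∧
      cdot G (ind H l) χ ≠ 0 ∧ cdot G (ind H l) φ = 0

/-- `G` is relative almost monomial with respect to the (normal) subgroup `N`. -/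
def IsRelAlmostMonomial (G : Type*) [Group G] [Finite G] (N : Subgroup G) : Prop :=
  ∀ χ φ : G → ℂ, IsIrrChar G χ → IsIrrChar G φ → χ ≠ φ →
    ∃ (H : Subgroup G) (hNH : N ≤ H) (ψ : H → ℂ), IsIrrChar H ψ ∧
      IsIrrChar N (resTo hNH ψ) ∧
      cdot G (ind H ψ) χ ≠ 0 ∧ cdot G (ind H ψ) φ = 0

/-- `H` is a subnormal subgroup of `G`. -/
def IsSubnormalSubgroup (G : Type*) [Group G] (H : Subgroup G) : Prop :=
  ∃ (n : ℕ) (c : Fin (n + 1) → Subgroup G), c 0 = H ∧ c (Fin.last n) = ⊤ ∧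
    ∀ i : Fin n, ((c i.castSucc).subgroupOf (c i.succ)).Normal

/-- `G` is normally almost monomial. -/
def IsNormallyAlmostMonomial (G : Type*) [Group G] [Finite G] : Prop :=
  ∀ χ φ : G → ℂ, IsIrrChar G χ → IsIrrChar G φ → χ ≠ φ →
    ∃ (H : Subgroup G), H.Normal ∧ ∃ l : H → ℂ, IsLinearChar H l ∧
      cdot G (ind H l) χ ≠ 0 ∧ cdot G (ind H l) φ = 0

/-- `G` is subnormally almost monomial. -/
def IsSubnormallyAlmostMonomial (G : Type*) [Group G] [Finite G] : Prop :=
  ∀ χ φ : G → ℂ, IsIrrChar G χ → IsIrrChar G φ → χ ≠ φ →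
    ∃ (H : Subgroup G), IsSubnormalSubgroup G H ∧ ∃ l : H → ℂ, IsLinearChar H l ∧
      cdot G (ind H l) χ ≠ 0 ∧ cdot G (ind H l) φ = 0

/-- `G` is quasi-monomial. -/
def IsQuasiMonomial (G : Type*) [Group G] [Finite G] : Prop :=
  ∀ χ : G → ℂ, IsIrrChar G χ → ∃ (H : Subgroup G) (l : H → ℂ) (d : ℕ),
    IsLinearChar H l ∧ 1 ≤ d ∧ ind H l = fun g => (d : ℂ) * χ g

/-- The set of irreducible characters of `G`. -/
def IrrSet (G : Type*) [Group G] [Finite G] : Set (G → ℂ) := {χ | IsIrrChar G χ}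

/-- `f` belongs to the semigroup `M(G)` generated by monomial characters. -/
def InMG (G : Type*) [Group G] [Finite G] (f : G → ℂ) : Prop :=
  ∃ (k : ℕ) (H : Fin (k + 1) → Subgroup G) (l : ∀ i, (H i) → ℂ),
    (∀ i, IsLinearChar (H i) (l i)) ∧ f = fun g => ∑ i, ind (H i) (l i) g

/-- The set of irreducible constituents of a class function `f`. -/
def Cons (G : Type*) [Group G] [Finite G] (f : G → ℂ) : Set (G → ℂ) :=
  {φ | IsIrrChar G φ ∧ cdot G φ f ≠ 0}

/-- `L_t(G)`: the number of constituent-sets of size `t` of characters in `M(G)`. -/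
def Lt (G : Type*) [Group G] [Finite G] (t : ℕ) : ℕ :=
  Nat.card {S : Set (G → ℂ) // ∃ f, InMG G f ∧ Cons G f = S ∧ Nat.card S = t}

end


-- ===== auxiliary lemmas =====
section Aux
open scoped Classical

lemma trace_idem {n : ℕ} (P : Matrix (Fin n) (Fin n) ℂ) (hP : P * P = P) :
    ∃ m : ℕ, P.trace = (m : ℂ) := by
  have h : (Matrix.toLin' P) ∘ₗ (Matrix.toLin' P) = Matrix.toLin' P := by
    rw [← Matrix.toLin'_mul, hP]
  obtain ⟨p, hp⟩ := (LinearMap.isProj_iff_isIdempotentElem _).mpr h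
  refine ⟨Module.finrank ℂ p, ?_⟩
  have := hp.trace
  rw [LinearMap.trace_eq_matrix_trace ℂ (Pi.basisFun ℂ (Fin n))] at this
  rw [← this, LinearMap.toMatrix_eq_toMatrix', LinearMap.toMatrix'_toLin']

lemma conj_unit_val {H : Type*} [Group H] [Finite H] (μ : H →* ℂˣ) (h : H) :
    (starRingEnd ℂ) (μ h : ℂ) = ((μ h)⁻¹ : ℂˣ) := by
  have hk : (0:ℕ) < orderOf h := orderOf_pos h
  have h1 : (μ h : ℂ) ^ orderOf h = 1 := by
    rw [← Units.val_pow_eq_pow_val, ← map_pow, pow_orderOf_eq_one, map_one, Units.val_one]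
  have hnorm : ‖(μ h : ℂ)‖ = 1 := by
    have h2 : ‖(μ h : ℂ)‖ ^ orderOf h = 1 := by
      rw [← norm_pow, h1, norm_one]
    rcases (pow_eq_one_iff_of_ne_zero hk.ne').mp h2 with h3 | ⟨h3, _⟩
    · exact h3
    · exfalso; have := norm_nonneg (μ h : ℂ); rw [h3] at this; linarith
  rw [← Complex.inv_eq_conj hnorm]
  simp

lemma cdot_char_linear {H : Type*} [Group H] [Finite H] (χ l : H → ℂ)
    (hχ : IsChar H χ) (hl : IsLinearChar H l) : ∃ m : ℕ, cdot H χ l = (m : ℂ) := by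
  haveI := Fintype.ofFinite H
  obtain ⟨n, ρ, rfl⟩ := hχ
  obtain ⟨μ, rfl⟩ := hl
  set σ : H → Matrix (Fin n) (Fin n) ℂ := fun h => (((μ h)⁻¹ : ℂˣ) : ℂ) • (ρ h : Matrix (Fin n) (Fin n) ℂ) with hσ
  have hmul : ∀ a b : H, σ (a * b) = σ a * σ b := by
    intro a b
    simp only [hσ, map_mul, mul_inv_rev, Units.val_mul, Matrix.GeneralLinearGroup.coe_mul]
    rw [Matrix.smul_mul, Matrix.mul_smul, smul_smul, mul_comm]
  set c : ℂ := (Nat.card H : ℂ)⁻¹ with hc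
  have hcard : (Nat.card H : ℂ) ≠ 0 := by
    exact_mod_cast Nat.card_pos.ne'
  set S : Matrix (Fin n) (Fin n) ℂ := ∑ h : H, σ h with hS
  have hfix : ∀ g : H, S * σ g = S := by
    intro g
    rw [hS, Finset.sum_mul]
    rw [← Equiv.sum_comp (Equiv.mulRight g) σ]
    exact Finset.sum_congr rfl fun a _ => (hmul a g).symm
  have hidem : (c • S) * (c • S) = c • S := by
    have : S * S = (Nat.card H : ℂ) • S := by
      rw [hS, Finset.mul_sum]
      simp_rw [← hS, hfix]
      rw [Finset.sum_const, Nat.card_eq_fintype_card]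
      simp [← Nat.cast_smul_eq_nsmul ℂ]
    rw [Matrix.smul_mul, Matrix.mul_smul, this, smul_smul, smul_smul, hc]
    rw [mul_assoc, inv_mul_cancel₀ hcard, mul_one]
  obtain ⟨m, hm⟩ := trace_idem (c • S) hidem
  refine ⟨m, ?_⟩
  rw [← hm, cdot, finsum_eq_sum_of_fintype]
  have htr : (c • S).trace = c * ∑ h : H, (σ h).trace := by
    rw [Matrix.trace_smul, smul_eq_mul, hS]
    congr 1
    exact Matrix.trace_sum _ _
  rw [htr]
  congr 1
  refine Finset.sum_congr rfl fun h _ => ?_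
  rw [conj_unit_val, hσ, Matrix.trace_smul]
  simp [mul_comm]

lemma cdot_conj_symm {G : Type*} [Group G] [Finite G] (f h : G → ℂ) :
    cdot G f h = (starRingEnd ℂ) (cdot G h f) := by
  haveI := Fintype.ofFinite G
  rw [cdot, cdot, finsum_eq_sum_of_fintype, finsum_eq_sum_of_fintype, map_mul, map_sum]
  congr 1
  · rw [map_inv₀, Complex.conj_natCast]
  · exact Finset.sum_congr rfl fun g _ => by rw [map_mul, Complex.conj_conj, mul_comm]

lemma frobeniusRecip {G : Type*} [Group G] [Finite G] (H : Subgroup G) (f : H → ℂ) (χ : G → ℂ)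
    (hχ : ∀ x g : G, χ (x * g * x⁻¹) = χ g) :
    cdot G (ind H f) χ = cdot H f (res H χ) := by
  haveI := Fintype.ofFinite G
  haveI := Fintype.ofFinite H
  set Φ : G → ℂ := fun g => if hg : g ∈ H then f ⟨g, hg⟩ * (starRingEnd ℂ) (χ g) else 0 with hΦ
  set T : G → G → ℂ := fun x g =>
    (if h : x * g * x⁻¹ ∈ H then f ⟨x * g * x⁻¹, h⟩ else 0) * (starRingEnd ℂ) (χ g) with hT
  have key : ∀ x : G, (∑ g : G, T x g) = ∑ g : G, Φ g := by
    intro x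
    rw [← Equiv.sum_comp (MulAut.conj x⁻¹).toEquiv]
    refine Finset.sum_congr rfl fun g _ => ?_
    have h1 : x * (x⁻¹ * g * x⁻¹⁻¹) * x⁻¹ = g := by group
    have h2 : χ (x⁻¹ * g * x⁻¹⁻¹) = χ g := hχ x⁻¹ g
    show T x (x⁻¹ * g * x⁻¹⁻¹) = Φ g
    simp only [hT, hΦ]
    rw [h2]
    simp only [h1]
    by_cases hg : g ∈ H
    · rw [dif_pos hg, dif_pos hg]
    · rw [dif_neg hg, dif_neg hg, zero_mul]
  have hone : ∀ h : H, Φ h.1 = f h * (starRingEnd ℂ) (res H χ h) := by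
    intro h
    rw [hΦ]
    simp only
    rw [dif_pos h.2]
    rfl
  have hsub : (∑ g : G, Φ g) = ∑ h : H, f h * (starRingEnd ℂ) (res H χ h) := by
    rw [show (∑ h : H, f h * (starRingEnd ℂ) (res H χ h)) = ∑ h : H, Φ h.1 from
      Finset.sum_congr rfl fun h _ => (hone h).symm]
    rw [← Finset.sum_subtype ((H : Set G).toFinset) (fun x => by simp) Φ]
    refine (Finset.sum_subset (Finset.subset_univ _) fun g _ hg => ?_).symm
    rw [hΦ]
    simp only
    rw [dif_neg (fun hc => hg (by simpa using hc))]
  have hG : (Nat.card G : ℂ) ≠ 0 := by exact_mod_cast Nat.card_pos.ne'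
  have hR : cdot H f (res H χ) = (Nat.card H : ℂ)⁻¹ *
      ∑ h : H, f h * (starRingEnd ℂ) (res H χ h) := by
    rw [cdot, finsum_eq_sum_of_fintype]
  rw [cdot, finsum_eq_sum_of_fintype]
  calc (Nat.card G : ℂ)⁻¹ * ∑ g : G, ind H f g * (starRingEnd ℂ) (χ g)
      = (Nat.card G : ℂ)⁻¹ * ((Nat.card H : ℂ)⁻¹ * ∑ g : G, ∑ x : G, T x g) := by
        congr 1
        rw [Finset.mul_sum]
        refine Finset.sum_congr rfl fun g _ => ?_
        rw [ind, finsum_eq_sum_of_fintype, mul_assoc, Finset.sum_mul]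
    _ = (Nat.card G : ℂ)⁻¹ * ((Nat.card H : ℂ)⁻¹ * ∑ x : G, ∑ g : G, T x g) := by
        rw [Finset.sum_comm]
    _ = (Nat.card G : ℂ)⁻¹ * ((Nat.card H : ℂ)⁻¹ *
        ((Nat.card G : ℂ) * ∑ g : G, Φ g)) := by
        rw [Finset.sum_congr rfl fun x _ => key x, Finset.sum_const, Finset.card_univ,
          nsmul_eq_mul, Nat.card_eq_fintype_card]
    _ = cdot H f (res H χ) := by
        rw [hR, ← hsub, mul_left_comm, ← mul_assoc ((Nat.card G : ℂ))⁻¹,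
          inv_mul_cancel₀ hG, one_mul]

lemma isChar_class {G : Type*} [Group G] (χ : G → ℂ) (hχ : IsChar G χ) :
    ∀ x g : G, χ (x * g * x⁻¹) = χ g := by
  obtain ⟨n, ρ, rfl⟩ := hχ
  intro x g
  simp only
  have h1 : (ρ (x * g * x⁻¹) : Matrix (Fin n) (Fin n) ℂ) =
      (ρ x : Matrix (Fin n) (Fin n) ℂ) * (ρ g : Matrix (Fin n) (Fin n) ℂ) *
      ((ρ x)⁻¹ : Matrix.GeneralLinearGroup (Fin n) ℂ) := by
    rw [map_mul, map_mul, map_inv, Units.val_mul, Units.val_mul]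
  have h2 : (((ρ x)⁻¹ : Matrix.GeneralLinearGroup (Fin n) ℂ) : Matrix (Fin n) (Fin n) ℂ) *
      ((ρ x : Matrix (Fin n) (Fin n) ℂ) * (ρ g : Matrix (Fin n) (Fin n) ℂ)) =
      (ρ g : Matrix (Fin n) (Fin n) ℂ) := by
    rw [← Units.val_mul, ← Units.val_mul, inv_mul_cancel_left]
  rw [h1, Matrix.trace_mul_comm, h2]

lemma isChar_res {G : Type*} [Group G] (H : Subgroup G) (χ : G → ℂ) (hχ : IsChar G χ) :
    IsChar H (res H χ) := by
  obtain ⟨n, ρ, rfl⟩ := hχ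
  exact ⟨n, ρ.comp H.subtype, rfl⟩

lemma cdot_ind_linear_nat {G : Type*} [Group G] [Finite G] (H : Subgroup G) (l : H → ℂ)
    (hl : IsLinearChar H l) (ψ : G → ℂ) (hψ : IsChar G ψ) :
    ∃ m : ℕ, cdot G (ind H l) ψ = (m : ℂ) ∧ cdot G ψ (ind H l) = (m : ℂ) := by
  obtain ⟨m, hm⟩ := cdot_char_linear (res H ψ) l (isChar_res H ψ hψ) hl
  have h1 : cdot G (ind H l) ψ = (m : ℂ) := by
    rw [frobeniusRecip H l ψ (isChar_class ψ hψ), cdot_conj_symm, hm, Complex.conj_natCast]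
  exact ⟨m, h1, by rw [cdot_conj_symm, h1, Complex.conj_natCast]⟩

lemma cdot_sum_right {G : Type*} [Group G] [Finite G] (φ : G → ℂ) {k : ℕ}
    (F : Fin k → G → ℂ) :
    cdot G φ (fun g => ∑ i, F i g) = ∑ i, cdot G φ (F i) := by
  haveI := Fintype.ofFinite G
  simp only [cdot, finsum_eq_sum_of_fintype, map_sum, Finset.mul_sum]
  exact Finset.sum_comm

end Aux

theorem stmt3 (G : Type*) [Group G] [Finite G] (r : ℕ) (hr : r = Nat.card (IrrSet G))
    (hr2 : 2 ≤ r) (t : ℕ) (ht1 : 1 ≤ t) (ht2 : t ≤ r - 1)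
    (hL : Nat.choose r t - Nat.choose (r - 2) (t - 1) + 1 ≤ Lt G t) :
    IsAlmostMonomial G := by
  by_contra hAM
  rw [IsAlmostMonomial] at hAM
  push_neg at hAM
  obtain ⟨χ, φ, hχ, hφ, hne, hpair⟩ := hAM
  -- hpair : ∀ H l, IsLinearChar H l → cdot G (ind H l) χ ≠ 0 → cdot G (ind H l) φ ≠ 0
  have hpair' : ∀ (H : Subgroup G) (l : H → ℂ), IsLinearChar H l →
      cdot G (ind H l) χ ≠ 0 → cdot G (ind H l) φ ≠ 0 := by
    intro H l hl h1 h2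
    exact (hpair H l hl h1) h2
  -- Step A
  have stepA : ∀ f : G → ℂ, InMG G f → χ ∈ Cons G f → φ ∈ Cons G f := by
    intro f hf hχf
    obtain ⟨k, Hs, ls, hlin, rfl⟩ := hf
    choose m hm1 hm2 using fun i =>
      cdot_ind_linear_nat (Hs i) (ls i) (hlin i) χ hχ.1
    choose m' hm'1 hm'2 using fun i =>
      cdot_ind_linear_nat (Hs i) (ls i) (hlin i) φ hφ.1
    have hχsum : cdot G χ (fun g => ∑ i, ind (Hs i) (ls i) g) =
        ∑ i, cdot G χ (ind (Hs i) (ls i)) := cdot_sum_right χ _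
    have hφsum : cdot G φ (fun g => ∑ i, ind (Hs i) (ls i) g) =
        ∑ i, cdot G φ (ind (Hs i) (ls i)) := cdot_sum_right φ _
    obtain ⟨hχirr, hχne⟩ := hχf
    rw [hχsum] at hχne
    obtain ⟨j, _, hj⟩ := Finset.exists_ne_zero_of_sum_ne_zero hχne
    have hjχ : cdot G (ind (Hs j) (ls j)) χ ≠ 0 := by
      rw [hm1 j]
      rw [hm2 j] at hj
      exact hj
    have hjφ : cdot G (ind (Hs j) (ls j)) φ ≠ 0 := hpair' _ _ (hlin j) hjχ
    have hjm' : m' j ≠ 0 := by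
      intro h0
      apply hjφ
      rw [hm'1 j, h0, Nat.cast_zero]
    refine ⟨hφ, ?_⟩
    rw [hφsum]
    have : (∑ i, cdot G φ (ind (Hs i) (ls i))) = ((∑ i, m' i : ℕ) : ℂ) := by
      rw [Nat.cast_sum]
      exact Finset.sum_congr rfl fun i _ => hm'2 i
    rw [this]
    have : 0 < ∑ i, m' i :=
      Nat.lt_of_lt_of_le (Nat.pos_of_ne_zero hjm')
        (Finset.single_le_sum (fun i _ => Nat.zero_le _) (Finset.mem_univ j))
    exact_mod_cast this.ne'
  -- Step B : counting
  have hfinIrr : Finite (IrrSet G) := by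
    have : 0 < Nat.card (IrrSet G) := by omega
    exact (Nat.card_pos_iff.mp this).2
  haveI := hfinIrr
  haveI := Fintype.ofFinite (IrrSet G)
  have hIrrFin : (IrrSet G).Finite := Set.toFinite _
  set I : Finset (G → ℂ) := (IrrSet G).toFinset with hI
  have hIcard : I.card = r := by
    rw [hI, Set.toFinset_card, ← Nat.card_eq_fintype_card, hr]
  have hχI : χ ∈ I := by rw [hI, Set.mem_toFinset]; exact hχ
  have hφI : φ ∈ I := by rw [hI, Set.mem_toFinset]; exact hφ
  set F : Finset (Finset (G → ℂ)) :=
    (I.powersetCard t).filter (fun s => ¬(χ ∈ s ∧ φ ∉ s)) with hF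
  set B : Finset (Finset (G → ℂ)) :=
    (I.powersetCard t).filter (fun s => χ ∈ s ∧ φ ∉ s) with hB
  -- Lt G t ≤ F.card
  have hLtle : Lt G t ≤ F.card := by
    rw [Lt]
    have hsubIrr : ∀ S : {S : Set (G → ℂ) // ∃ f, InMG G f ∧ Cons G f = S ∧ Nat.card S = t},
        S.1 ⊆ IrrSet G := by
      intro S
      obtain ⟨f, hf, hCons, hcard⟩ := S.2
      rw [← hCons]
      exact fun ψ hψ => hψ.1
    have hinj : ∃ Ψ : {S : Set (G → ℂ) // ∃ f, InMG G f ∧ Cons G f = S ∧ Nat.card S = t} →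
        {s : Finset (G → ℂ) // s ∈ F}, Function.Injective Ψ := by
      refine ⟨fun S => ⟨(Set.Finite.subset hIrrFin (hsubIrr S)).toFinset, ?_⟩, ?_⟩
      · obtain ⟨f, hf, hCons, hcard⟩ := S.2
        rw [hF, Finset.mem_filter, Finset.mem_powersetCard]
        refine ⟨⟨?_, ?_⟩, ?_⟩
        · intro x hx
          rw [Set.Finite.mem_toFinset] at hx
          rw [hI, Set.mem_toFinset]
          rw [← hCons] at hx
          exact hx.1
        · have he : (Set.Finite.subset hIrrFin (hsubIrr S)).toFinset.card = (S.1).ncard :=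
            (Set.ncard_eq_toFinset_card _ _).symm
          rw [he, ← Nat.card_coe_set_eq]
          exact hcard
        · rintro ⟨hχS, hφS⟩
          rw [Set.Finite.mem_toFinset] at hχS
          apply hφS
          rw [Set.Finite.mem_toFinset, ← hCons]
          rw [← hCons] at hχS
          exact stepA f hf hχS
      · intro S₁ S₂ h12
        have h13 : (Set.Finite.subset hIrrFin (hsubIrr S₁)).toFinset =
            (Set.Finite.subset hIrrFin (hsubIrr S₂)).toFinset := congrArg Subtype.val h12
        have h14 := congrArg (fun s => ((s : Finset (G → ℂ)) : Set (G → ℂ))) h13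
        simp only [Set.Finite.coe_toFinset] at h14
        exact Subtype.ext h14
    obtain ⟨Ψ, hΨ⟩ := hinj
    calc Nat.card {S : Set (G → ℂ) // ∃ f, InMG G f ∧ Cons G f = S ∧ Nat.card S = t}
        ≤ Nat.card {s : Finset (G → ℂ) // s ∈ F} := Nat.card_le_card_of_injective Ψ hΨ
      _ = F.card := by rw [Nat.card_eq_fintype_card, Fintype.card_coe]
  -- F.card = C(r,t) - B.card
  have hFB : F.card + B.card = Nat.choose r t := by
    have h := Finset.card_filter_add_card_filter_not (s := I.powersetCard t)
      (p := fun s => χ ∈ s ∧ φ ∉ s)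
    rw [Finset.card_powersetCard, hIcard] at h
    rw [hF, hB, add_comm]
    convert h using 3
  -- B.card ≥ C(r-2, t-1)
  set J : Finset (G → ℂ) := (I.erase χ).erase φ with hJ
  have hφJ : φ ∈ I.erase χ := Finset.mem_erase.mpr ⟨fun h => hne h.symm, hφI⟩
  have hJcard : J.card = r - 2 := by
    rw [hJ, Finset.card_erase_of_mem hφJ, Finset.card_erase_of_mem hχI, hIcard]
    omega
  have hχJ : χ ∉ J := fun h => (Finset.mem_erase.mp (Finset.mem_erase.mp h).2).1 rfl
  have hφJ' : φ ∉ J := fun h => (Finset.mem_erase.mp h).1 rfl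
  have hBcard : Nat.choose (r - 2) (t - 1) ≤ B.card := by
    have hc : Nat.choose (r - 2) (t - 1) = (J.powersetCard (t - 1)).card := by
      rw [Finset.card_powersetCard, hJcard]
    rw [hc]
    apply Finset.card_le_card_of_injOn (fun u => insert χ u)
    · intro u hu
      obtain ⟨huJ, hucard⟩ := Finset.mem_powersetCard.mp hu
      have hχu : χ ∉ u := fun h => hχJ (huJ h)
      rw [Finset.mem_coe, hB, Finset.mem_filter, Finset.mem_powersetCard]
      refine ⟨⟨?_, ?_⟩, Finset.mem_insert_self _ _, ?_⟩
      · intro x hx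
        rcases Finset.mem_insert.mp hx with h | h
        · exact h ▸ hχI
        · exact (Finset.mem_erase.mp (Finset.mem_erase.mp (huJ h)).2).2
      · rw [Finset.card_insert_of_notMem hχu, hucard]
        omega
      · intro hφins
        rcases Finset.mem_insert.mp hφins with h | h
        · exact hne h.symm
        · exact hφJ' (huJ h)
    · intro u hu v hv huv
      obtain ⟨huJ, _⟩ := Finset.mem_powersetCard.mp hu
      obtain ⟨hvJ, _⟩ := Finset.mem_powersetCard.mp hv
      have hχu : χ ∉ u := fun h => hχJ (huJ h)
      have hχv : χ ∉ v := fun h => hχJ (hvJ h)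
      have := congrArg (fun s : Finset (G → ℂ) => s.erase χ) huv
      simpa [Finset.erase_insert hχu, Finset.erase_insert hχv] using this
  omega
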